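/- Let d ≥ 1, k > 0, and let a ≥ 1 and b ≥ 0 be natural numbers. Then for all q ∈ ℝ^d one has r̄(q;k)^a · (‖q‖² + r̄(q;k))^b ≤ k^{2(a+b)} · (1 + b/a)^b. Equivalently, in the scaled variable y = ‖q‖²/k² ≥ 0: (y/(e^y − 1))^a · (y·e^y/(e^y − 1))^b ≤ (1 + b/a)^b for all y ≥ 0 (with the value at y = 0 taken as the continuous limit 1). -/

import Mathlib

open Classical in
/-- The exponential regulator `r̄(q;k) = ‖q‖²/(exp(‖q‖²/k²) − 1)`, extended
continuously by `r̄(0;k) = k²`. -/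
noncomputable def rbar (d : ℕ) (q : EuclideanSpace ℝ (Fin d)) (k : ℝ) : ℝ :=
  if q = 0 then k ^ 2 else ‖q‖ ^ 2 / (Real.exp (‖q‖ ^ 2 / k ^ 2) - 1)

lemma key_ineq (a b : ℕ) (ha : 1 ≤ a) (y : ℝ) (hy : 0 < y) :
    (y / (Real.exp y - 1)) ^ a * (y * Real.exp y / (Real.exp y - 1)) ^ b
      ≤ (1 + (b : ℝ) / (a : ℝ)) ^ b := by
  have haR : (0:ℝ) < a := by exact_mod_cast ha
  set c : ℝ := 1 + (b:ℝ)/a with hc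
  have hc0 : (0:ℝ) < c := by positivity
  have hc1 : (1:ℝ) ≤ c := by
    rw [hc]
    have : (0:ℝ) ≤ (b:ℝ)/a := by positivity
    linarith
  have hexp : y + 1 < Real.exp y := Real.add_one_lt_exp (ne_of_gt hy)
  have hE : 0 < Real.exp y - 1 := by linarith
  have hmul : Real.exp (-y) * Real.exp y = 1 := by
    rw [← Real.exp_add]; simp
  have hy1 : (0:ℝ) < 1 + y := by linarith
  -- first factor bound
  have h1 : y / (Real.exp y - 1) ≤ (1 + y) * Real.exp (-y) := by
    rw [div_le_iff₀ hE]
    nlinarith [mul_le_mul_of_nonneg_right hexp.le (Real.exp_pos (-y)).le,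
      Real.exp_pos (-y)]
  -- second factor bound
  have h2 : y * Real.exp y / (Real.exp y - 1) ≤ 1 + y := by
    rw [div_le_iff₀ hE]
    nlinarith
  have hnn1 : 0 ≤ y / (Real.exp y - 1) := by positivity
  have hnn2 : 0 ≤ y * Real.exp y / (Real.exp y - 1) := by positivity
  have hstep1 :
      (y / (Real.exp y - 1)) ^ a * (y * Real.exp y / (Real.exp y - 1)) ^ b
        ≤ ((1 + y) * Real.exp (-y)) ^ a * (1 + y) ^ b := by
    apply mul_le_mul (pow_le_pow_left₀ hnn1 h1 a) (pow_le_pow_left₀ hnn2 h2 b)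
      (pow_nonneg hnn2 b) (pow_nonneg (by positivity) a)
  -- key exponential bound on (1+y)
  have hkey : 1 + y ≤ c * Real.exp ((y - (b:ℝ)/a) / c) := by
    have h := Real.add_one_le_exp ((y - (b:ℝ)/a) / c)
    have := mul_le_mul_of_nonneg_left h hc0.le
    have heq : 1 + y = c * ((y - (b:ℝ)/a) / c + 1) := by
      rw [hc]; field_simp; ring
    calc 1 + y = c * ((y - (b:ℝ)/a) / c + 1) := heq
      _ ≤ c * Real.exp ((y - (b:ℝ)/a) / c) := this
  have hexp_eq : ((a + b : ℕ) : ℝ) * ((y - (b:ℝ)/a) / c) = a * y - b := by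
    rw [hc]
    push_cast
    field_simp
  have h3 : (1 + y) ^ (a + b) ≤ c ^ (a + b) * Real.exp ((a:ℝ) * y - b) := by
    calc (1 + y) ^ (a + b) ≤ (c * Real.exp ((y - (b:ℝ)/a) / c)) ^ (a + b) :=
          pow_le_pow_left₀ hy1.le hkey _
      _ = c ^ (a + b) * Real.exp ((a:ℝ) * y - b) := by
          rw [mul_pow, ← Real.exp_nat_mul, hexp_eq]
  have hca : c ^ a ≤ Real.exp b := by
    have h := Real.add_one_le_exp ((b:ℝ)/a)
    have : c ≤ Real.exp ((b:ℝ)/a) := by rw [hc]; linarith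
    calc c ^ a ≤ Real.exp ((b:ℝ)/a) ^ a := pow_le_pow_left₀ hc0.le this a
      _ = Real.exp ((a:ℝ) * ((b:ℝ)/a)) := (Real.exp_nat_mul _ a).symm
      _ = Real.exp b := by rw [mul_div_cancel₀ _ (ne_of_gt haR)]
  -- combine
  have hrearr : ((1 + y) * Real.exp (-y)) ^ a * (1 + y) ^ b
      = (1 + y) ^ (a + b) * Real.exp (-y) ^ a := by
    rw [mul_pow, pow_add]; ring
  have hexpprod : Real.exp ((a:ℝ) * y - b) * Real.exp (-y) ^ a = Real.exp (-(b:ℝ)) := by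
    rw [← Real.exp_nat_mul, ← Real.exp_add]
    congr 1
    ring
  have hfinal : (1 + y) ^ (a + b) * Real.exp (-y) ^ a ≤ c ^ b := by
    have hexpnn : 0 ≤ Real.exp (-y) ^ a := pow_nonneg (Real.exp_pos _).le a
    calc (1 + y) ^ (a + b) * Real.exp (-y) ^ a
        ≤ c ^ (a + b) * Real.exp ((a:ℝ) * y - b) * Real.exp (-y) ^ a := by
          apply mul_le_mul_of_nonneg_right h3 hexpnn
      _ = c ^ b * (c ^ a * Real.exp (-(b:ℝ))) := by
          rw [mul_assoc, hexpprod, pow_add]; ring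
      _ ≤ c ^ b * 1 := by
          apply mul_le_mul_of_nonneg_left _ (pow_nonneg hc0.le b)
          have : c ^ a * Real.exp (-(b:ℝ)) ≤ Real.exp b * Real.exp (-(b:ℝ)) :=
            mul_le_mul_of_nonneg_right hca (Real.exp_pos _).le
          rw [← Real.exp_add] at this
          simpa using this
      _ = c ^ b := mul_one _
  calc (y / (Real.exp y - 1)) ^ a * (y * Real.exp y / (Real.exp y - 1)) ^ b
      ≤ ((1 + y) * Real.exp (-y)) ^ a * (1 + y) ^ b := hstep1
    _ = (1 + y) ^ (a + b) * Real.exp (-y) ^ a := hrearr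
    _ ≤ c ^ b := hfinal

theorem stmt_0 (d : ℕ) (hd : 1 ≤ d) (k : ℝ) (hk : 0 < k) (a b : ℕ) (ha : 1 ≤ a) :
    (∀ q : EuclideanSpace ℝ (Fin d),
      rbar d q k ^ a * (‖q‖ ^ 2 + rbar d q k) ^ b
        ≤ k ^ (2 * (a + b)) * (1 + (b : ℝ) / (a : ℝ)) ^ b) ∧
    (∀ y : ℝ, 0 < y →
      (y / (Real.exp y - 1)) ^ a * (y * Real.exp y / (Real.exp y - 1)) ^ b
        ≤ (1 + (b : ℝ) / (a : ℝ)) ^ b) := by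
  have haR : (0:ℝ) < a := by exact_mod_cast ha
  have hc1 : (1:ℝ) ≤ 1 + (b:ℝ)/a := by
    have : (0:ℝ) ≤ (b:ℝ)/a := by positivity
    linarith
  constructor
  · intro q
    have hk2 : (0:ℝ) < k ^ 2 := by positivity
    have hpowk : k ^ (2 * (a + b)) = (k ^ 2) ^ a * (k ^ 2) ^ b := by
      rw [pow_mul, pow_add]
    by_cases hq : q = 0
    · subst hq
      rw [rbar, if_pos rfl, norm_zero]
      rw [show ((0:ℝ) ^ 2 + k ^ 2) = k ^ 2 by ring]
      rw [show (k ^ 2) ^ a * (k ^ 2) ^ b = k ^ (2 * (a + b)) from hpowk.symm]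
      exact le_mul_of_one_le_right (by positivity) (one_le_pow₀ hc1)
    · set y : ℝ := ‖q‖ ^ 2 / k ^ 2 with hydef
      have hq0 : (0:ℝ) < ‖q‖ := norm_pos_iff.mpr hq
      have hy : 0 < y := by positivity
      have hnorm : ‖q‖ ^ 2 = k ^ 2 * y := by
        rw [hydef]; field_simp
      have hexp : y + 1 < Real.exp y := Real.add_one_lt_exp (ne_of_gt hy)
      have hE : 0 < Real.exp y - 1 := by linarith
      have hr : rbar d q k = k ^ 2 * (y / (Real.exp y - 1)) := by
        rw [rbar, if_neg hq, ← hydef, hnorm, mul_div_assoc]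
      have hr2 : ‖q‖ ^ 2 + rbar d q k = k ^ 2 * (y * Real.exp y / (Real.exp y - 1)) := by
        rw [hr, hnorm]
        field_simp
        ring
      rw [hr2, hr, mul_pow, mul_pow, hpowk]
      have hkey := key_ineq a b ha y hy
      calc (k ^ 2) ^ a * (y / (Real.exp y - 1)) ^ a *
            ((k ^ 2) ^ b * (y * Real.exp y / (Real.exp y - 1)) ^ b)
          = (k ^ 2) ^ a * (k ^ 2) ^ b *
            ((y / (Real.exp y - 1)) ^ a * (y * Real.exp y / (Real.exp y - 1)) ^ b) := by
            ring
        _ ≤ (k ^ 2) ^ a * (k ^ 2) ^ b * (1 + (b:ℝ)/a) ^ b := by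
            apply mul_le_mul_of_nonneg_left hkey (by positivity)
  · intro y hy
    exact key_ineq a b ha y hy
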